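/- If the finite weighted hypergraph G is nonempty and connected, then the energy function f attains a global minimum on U; i.e., there exists (x_1*,...,x_k*) ∈ U with f(x_1*,...,x_k*) ≤ f(x_1,...,x_k) for all (x_1,...,x_k) ∈ U. -/

import Mathlib

open Finset in
/-- The energy function of a weighted hypergraph. -/
noncomputable def hyperEnergy {k l d : ℕ} (e : Fin l → Finset (Fin k))
    (c : Fin l → ℝ) (w : Fin k → ℝ) (α β γ δ : ℝ)
    (x : Fin k → EuclideanSpace ℝ (Fin d)) : ℝ :=
  α / 2 * ∑ j, c j * ∑ i ∈ e j,
      ‖x i - ((e j).card : ℝ)⁻¹ • ∑ i' ∈ e j, x i'‖ ^ γ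
  + β / 2 * ∑ j : Fin k, ∑ i ∈ univ.erase j, w i * w j / ‖x i - x j‖ ^ δ

/-- A hypergraph on `Fin k` is connected if every partition of the vertices into two
disjoint nonempty parts is crossed by some hyperedge. -/
def FinHyperConnected {k l : ℕ} (e : Fin l → Finset (Fin k)) : Prop :=
  ∀ V₁ V₂ : Finset (Fin k), V₁ ∪ V₂ = Finset.univ → Disjoint V₁ V₂ →
    V₁.Nonempty → V₂.Nonempty →
      ∃ j, (e j ∩ V₁).Nonempty ∧ (e j ∩ V₂).Nonempty

section Helpers

open Finset Real

variable {k l d : ℕ} {e : Fin l → Finset (Fin k)}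
    {c : Fin l → ℝ} {w : Fin k → ℝ} {α β γ δ : ℝ}

lemma hyperEnergy_nonneg (hc : ∀ j, 0 ≤ c j) (hw : ∀ i, 0 ≤ w i)
    (hα : 0 ≤ α) (hβ : 0 ≤ β) (x : Fin k → EuclideanSpace ℝ (Fin d)) :
    0 ≤ hyperEnergy e c w α β γ δ x := by
  unfold hyperEnergy
  have h1 : (0:ℝ) ≤ ∑ j, c j * ∑ i ∈ e j,
      ‖x i - ((e j).card : ℝ)⁻¹ • ∑ i' ∈ e j, x i'‖ ^ γ := by
    refine Finset.sum_nonneg fun j _ => mul_nonneg (hc j) (Finset.sum_nonneg fun i _ => ?_)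
    exact Real.rpow_nonneg (norm_nonneg _) _
  have h2 : (0:ℝ) ≤ ∑ j : Fin k, ∑ i ∈ univ.erase j, w i * w j / ‖x i - x j‖ ^ δ := by
    refine Finset.sum_nonneg fun j _ => Finset.sum_nonneg fun i _ => ?_
    exact div_nonneg (mul_nonneg (hw i) (hw j)) (Real.rpow_nonneg (norm_nonneg _) _)
  exact add_nonneg (mul_nonneg (by linarith) h1) (mul_nonneg (by linarith) h2)

lemma attraction_le (hc : ∀ j, 0 ≤ c j) (hw : ∀ i, 0 ≤ w i)
    (hα : 0 ≤ α) (hβ : 0 ≤ β) (j : Fin l) {i : Fin k} (hi : i ∈ e j)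
    (x : Fin k → EuclideanSpace ℝ (Fin d)) :
    α / 2 * (c j * ‖x i - ((e j).card : ℝ)⁻¹ • ∑ i' ∈ e j, x i'‖ ^ γ)
      ≤ hyperEnergy e c w α β γ δ x := by
  unfold hyperEnergy
  have h2 : (0:ℝ) ≤ β / 2 * ∑ j : Fin k, ∑ i ∈ univ.erase j, w i * w j / ‖x i - x j‖ ^ δ := by
    refine mul_nonneg (by linarith) ?_
    refine Finset.sum_nonneg fun j _ => Finset.sum_nonneg fun i _ => ?_
    exact div_nonneg (mul_nonneg (hw i) (hw j)) (Real.rpow_nonneg (norm_nonneg _) _)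
  have h1 : c j * ‖x i - ((e j).card : ℝ)⁻¹ • ∑ i' ∈ e j, x i'‖ ^ γ
      ≤ ∑ j, c j * ∑ i ∈ e j, ‖x i - ((e j).card : ℝ)⁻¹ • ∑ i' ∈ e j, x i'‖ ^ γ := by
    have hterm : ‖x i - ((e j).card : ℝ)⁻¹ • ∑ i' ∈ e j, x i'‖ ^ γ
        ≤ ∑ i ∈ e j, ‖x i - ((e j).card : ℝ)⁻¹ • ∑ i' ∈ e j, x i'‖ ^ γ :=
      Finset.single_le_sum (f := fun i => ‖x i - ((e j).card : ℝ)⁻¹ • ∑ i' ∈ e j, x i'‖ ^ γ)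
        (fun i _ => Real.rpow_nonneg (norm_nonneg _) _) hi
    calc c j * ‖x i - ((e j).card : ℝ)⁻¹ • ∑ i' ∈ e j, x i'‖ ^ γ
        ≤ c j * ∑ i ∈ e j, ‖x i - ((e j).card : ℝ)⁻¹ • ∑ i' ∈ e j, x i'‖ ^ γ :=
          mul_le_mul_of_nonneg_left hterm (hc j)
      _ ≤ _ := Finset.single_le_sum (f := fun j => c j * ∑ i ∈ e j,
            ‖x i - ((e j).card : ℝ)⁻¹ • ∑ i' ∈ e j, x i'‖ ^ γ)
            (fun j _ => mul_nonneg (hc j) (Finset.sum_nonneg fun i _ =>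
              Real.rpow_nonneg (norm_nonneg _) _)) (mem_univ j)
  have := add_le_add (mul_le_mul_of_nonneg_left h1 (by linarith : (0:ℝ) ≤ α / 2))
    (le_refl (β / 2 * ∑ j : Fin k, ∑ i ∈ univ.erase j, w i * w j / ‖x i - x j‖ ^ δ))
  linarith

lemma repulsion_le (hc : ∀ j, 0 ≤ c j) (hw : ∀ i, 0 ≤ w i)
    (hα : 0 ≤ α) (hβ : 0 ≤ β) {i i' : Fin k} (hii : i ≠ i')
    (x : Fin k → EuclideanSpace ℝ (Fin d)) :
    β / 2 * (w i * w i' / ‖x i - x i'‖ ^ δ) ≤ hyperEnergy e c w α β γ δ x := by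
  unfold hyperEnergy
  have h1 : (0:ℝ) ≤ α / 2 * ∑ j, c j * ∑ i ∈ e j,
      ‖x i - ((e j).card : ℝ)⁻¹ • ∑ i' ∈ e j, x i'‖ ^ γ := by
    refine mul_nonneg (by linarith) ?_
    refine Finset.sum_nonneg fun j _ => mul_nonneg (hc j) (Finset.sum_nonneg fun i _ => ?_)
    exact Real.rpow_nonneg (norm_nonneg _) _
  have h2 : w i * w i' / ‖x i - x i'‖ ^ δ
      ≤ ∑ j : Fin k, ∑ i ∈ univ.erase j, w i * w j / ‖x i - x j‖ ^ δ := by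
    have hterm : w i * w i' / ‖x i - x i'‖ ^ δ
        ≤ ∑ i ∈ univ.erase i', w i * w i' / ‖x i - x i'‖ ^ δ :=
      Finset.single_le_sum (f := fun i => w i * w i' / ‖x i - x i'‖ ^ δ)
        (fun i _ => div_nonneg (mul_nonneg (hw i) (hw i'))
        (Real.rpow_nonneg (norm_nonneg _) _)) (mem_erase.mpr ⟨hii, mem_univ i⟩)
    refine hterm.trans ?_
    exact Finset.single_le_sum (f := fun j => ∑ i ∈ univ.erase j, w i * w j / ‖x i - x j‖ ^ δ)
      (fun j _ => Finset.sum_nonneg fun i _ => div_nonneg (mul_nonneg (hw i) (hw j))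
        (Real.rpow_nonneg (norm_nonneg _) _)) (mem_univ i')
  have := add_le_add h1 (mul_le_mul_of_nonneg_left h2 (by linarith : (0:ℝ) ≤ β / 2))
  linarith

lemma hyperEnergy_translate (he : ∀ j, (e j).Nonempty)
    (x : Fin k → EuclideanSpace ℝ (Fin d)) (t : EuclideanSpace ℝ (Fin d)) :
    hyperEnergy e c w α β γ δ (fun i => x i - t) = hyperEnergy e c w α β γ δ x := by
  unfold hyperEnergy
  congr 1
  · congr 1
    refine Finset.sum_congr rfl fun j _ => ?_
    congr 1
    refine Finset.sum_congr rfl fun i _ => ?_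
    congr 2
    have hcard : ((e j).card : ℝ) ≠ 0 := Nat.cast_ne_zero.mpr (he j).card_pos.ne'
    rw [Finset.sum_sub_distrib, Finset.sum_const, smul_sub,
      ← Nat.cast_smul_eq_nsmul ℝ, smul_smul, inv_mul_cancel₀ hcard, one_smul]
    rw [sub_sub_sub_cancel_right]
  · congr 1
    refine Finset.sum_congr rfl fun j _ => ?_
    refine Finset.sum_congr rfl fun i _ => ?_
    rw [sub_sub_sub_cancel_right]

/-- Connectivity propagates a per-edge distance bound to a global bound. -/
lemma reach_bound {E : Type*} [PseudoMetricSpace E]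
    (hconn : FinHyperConnected e) (x : Fin k → E) {D : ℝ} (hD : 0 ≤ D)
    (hedge : ∀ j, ∀ i ∈ e j, ∀ i' ∈ e j, dist (x i) (x i') ≤ D)
    (i₀ : Fin k) : ∀ i, dist (x i) (x i₀) ≤ D * k := by
  suffices H : ∀ n (S : Finset (Fin k)), Sᶜ.card = n → i₀ ∈ S →
      (∀ i ∈ S, dist (x i) (x i₀) ≤ D * S.card) →
      ∀ i, dist (x i) (x i₀) ≤ D * k by
    refine H ({i₀}ᶜ : Finset (Fin k)).card {i₀} rfl (mem_singleton_self _) ?_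
    intro i hi
    rw [Finset.mem_singleton] at hi
    subst hi
    simp only [dist_self, Finset.card_singleton, Nat.cast_one, mul_one]
    exact hD
  intro n
  induction n with
  | zero =>
    intro S hS hi₀ hbound i
    have hSuniv : S = univ := by
      have : Sᶜ = ∅ := Finset.card_eq_zero.mp hS
      rwa [Finset.compl_eq_empty_iff] at this
    refine (hbound i (hSuniv ▸ mem_univ i)).trans ?_
    have : (S.card : ℝ) ≤ (k : ℝ) := by
      have := Finset.card_le_univ S
      simp only [Fintype.card_fin] at this
      exact_mod_cast this
    exact mul_le_mul_of_nonneg_left this hD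
  | succ n ih =>
    intro S hS hi₀ hbound i
    have hne : Sᶜ.Nonempty := Finset.card_pos.mp (by omega)
    obtain ⟨j, ⟨i₁, hi₁⟩, ⟨i₂, hi₂⟩⟩ := hconn S Sᶜ (Finset.union_compl S)
      disjoint_compl_right ⟨i₀, hi₀⟩ hne
    rw [Finset.mem_inter] at hi₁ hi₂
    have hi₂S : i₂ ∉ S := Finset.mem_compl.mp hi₂.2
    refine ih (insert i₂ S) ?_ (Finset.mem_insert_of_mem hi₀) ?_ i
    · rw [Finset.compl_insert, Finset.card_erase_of_mem hi₂.2, hS]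
      omega
    · intro i' hi'
      rw [Finset.card_insert_of_notMem hi₂S]
      push_cast
      rcases Finset.mem_insert.mp hi' with h | h
      · subst h
        have htri : dist (x i') (x i₀) ≤ dist (x i') (x i₁) + dist (x i₁) (x i₀) :=
          dist_triangle _ _ _
        have h1 : dist (x i') (x i₁) ≤ D := hedge j _ hi₂.1 _ hi₁.1
        have h2 : dist (x i₁) (x i₀) ≤ D * S.card := hbound _ hi₁.2
        nlinarith
      · have := hbound _ h
        nlinarith

end Helpers

open Finset Real in
/-- If the finite weighted hypergraph is nonempty and connected, then the energy
function attains a global minimum on `U` (the set of layouts of pairwise distinct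
points). -/
theorem hyperEnergy_exists_min_of_connected {k l d : ℕ} (hk : 1 ≤ k) (hd : 3 ≤ d)
    (e : Fin l → Finset (Fin k)) (he : ∀ j, (e j).Nonempty)
    (hconn : FinHyperConnected e)
    (c : Fin l → ℝ) (w : Fin k → ℝ) (α β γ δ : ℝ)
    (hc : ∀ j, 0 < c j) (hw : ∀ i, 0 < w i)
    (hα : 0 < α) (hβ : 0 < β) (hγ : 0 < γ) (hδ : 0 < δ) :
    ∃ xstar : Fin k → EuclideanSpace ℝ (Fin d), Function.Injective xstar ∧
      ∀ x : Fin k → EuclideanSpace ℝ (Fin d), Function.Injective x →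
        hyperEnergy e c w α β γ δ xstar ≤ hyperEnergy e c w α β γ δ x := by
  classical
  set f := hyperEnergy e c w α β γ δ with hfdef
  rcases eq_or_lt_of_le hk with h1 | h2
  · -- case k = 1 : the constant-zero layout is injective and has zero energy
    subst h1
    refine ⟨fun _ => 0, fun a b _ => Subsingleton.elim a b, fun x _ => ?_⟩
    have h0 : f (fun _ => 0) = 0 := by
      rw [hfdef]
      unfold hyperEnergy
      simp [Real.zero_rpow hγ.ne', Real.zero_rpow hδ.ne']
    rw [h0]
    exact hyperEnergy_nonneg (fun j => (hc j).le) (fun i => (hw i).le) hα.le hβ.le x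
  · -- case 2 ≤ k
    set i₀ : Fin k := ⟨0, hk⟩ with hi₀def
    -- there is at least one hyperedge
    have hcompl : (({i₀} : Finset (Fin k))ᶜ).Nonempty := by
      rw [← Finset.card_pos, Finset.card_compl]
      simp only [Finset.card_singleton, Fintype.card_fin]
      omega
    obtain ⟨j₀, -, -⟩ := hconn {i₀} ({i₀}ᶜ) (Finset.union_compl _) disjoint_compl_right
      ⟨i₀, Finset.mem_singleton_self _⟩ hcompl
    haveI : Nonempty (Fin l) := ⟨j₀⟩
    haveI : Nonempty (Fin k) := ⟨i₀⟩
    set cmin : ℝ := Finset.univ.inf' Finset.univ_nonempty c with hcmindef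
    set wmin : ℝ := Finset.univ.inf' Finset.univ_nonempty w with hwmindef
    have hcmin : 0 < cmin := Finset.lt_inf'_iff _ |>.mpr fun j _ => hc j
    have hwmin : 0 < wmin := Finset.lt_inf'_iff _ |>.mpr fun i _ => hw i
    have hcmin_le : ∀ j, cmin ≤ c j := fun j => Finset.inf'_le _ (Finset.mem_univ j)
    have hwmin_le : ∀ i, wmin ≤ w i := fun i => Finset.inf'_le _ (Finset.mem_univ i)
    -- a reference injective configuration
    set v : EuclideanSpace ℝ (Fin d) := EuclideanSpace.single (⟨0, by omega⟩ : Fin d) (1:ℝ)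
      with hvdef
    have hv : v ≠ 0 := by
      intro h
      have h1 : ‖v‖ = 1 := by rw [hvdef, EuclideanSpace.norm_single, norm_one]
      rw [h, norm_zero] at h1
      norm_num at h1
    set x₀ : Fin k → EuclideanSpace ℝ (Fin d) := fun i => ((i : ℕ) : ℝ) • v with hx₀def
    have hx₀inj : Function.Injective x₀ := by
      intro a b hab
      have := smul_left_injective ℝ hv hab
      exact Fin.ext (Nat.cast_injective this)
    have hx₀0 : x₀ i₀ = 0 := by
      show ((i₀ : ℕ) : ℝ) • v = 0
      have h00 : (i₀ : ℕ) = 0 := rfl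
      rw [h00, Nat.cast_zero, zero_smul]
    set M : ℝ := f x₀ with hMdef
    have hM0 : 0 ≤ M :=
      hyperEnergy_nonneg (fun j => (hc j).le) (fun i => (hw i).le) hα.le hβ.le x₀
    set D : ℝ := (2*(M+1)/(α*cmin)) ^ γ⁻¹ with hDdef
    have hD0 : 0 ≤ D := Real.rpow_nonneg (by positivity) _
    set r : ℝ := (β*(wmin*wmin)/(2*(M+1))) ^ δ⁻¹ with hrdef
    have hr : 0 < r := Real.rpow_pos_of_pos (by positivity) _
    set R : ℝ := 2*D*(k:ℝ) with hRdef
    have hR0 : 0 ≤ R := by positivity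
    -- bound the distance to the barycenter on each edge
    have hEdge : ∀ x, f x ≤ M → ∀ j, ∀ i ∈ e j,
        ‖x i - ((e j).card : ℝ)⁻¹ • ∑ i' ∈ e j, x i'‖ ≤ D := by
      intro x hx j i hi
      set t : ℝ := ‖x i - ((e j).card : ℝ)⁻¹ • ∑ i' ∈ e j, x i'‖ with htdef
      have h1 : α/2 * (c j * t ^ γ) ≤ M :=
        (attraction_le (fun j => (hc j).le) (fun i => (hw i).le) hα.le hβ.le j hi x).trans hx
      have htγ0 : 0 ≤ t ^ γ := Real.rpow_nonneg (norm_nonneg _) _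
      have ht : t ^ γ ≤ 2*(M+1)/(α*cmin) := by
        rw [le_div_iff₀ (by positivity)]
        nlinarith [mul_nonneg (mul_nonneg hα.le (sub_nonneg.mpr (hcmin_le j))) htγ0]
      have := Real.rpow_le_rpow htγ0 ht (inv_nonneg.mpr hγ.le)
      rwa [Real.rpow_rpow_inv (norm_nonneg _) hγ.ne'] at this
    -- pairwise distance bound within each edge
    have hPair : ∀ x, f x ≤ M → ∀ j, ∀ i ∈ e j, ∀ i' ∈ e j,
        dist (x i) (x i') ≤ 2*D := by
      intro x hx j i hi i' hi'
      have h1 := hEdge x hx j i hi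
      have h2 := hEdge x hx j i' hi'
      have heq : x i - x i' = (x i - ((e j).card : ℝ)⁻¹ • ∑ i'' ∈ e j, x i'')
          - (x i' - ((e j).card : ℝ)⁻¹ • ∑ i'' ∈ e j, x i'') := by abel
      rw [dist_eq_norm, heq]
      calc ‖_ - _‖ ≤ _ + _ := norm_sub_le _ _
        _ ≤ 2*D := by linarith
    -- all points are within distance R of the origin
    have hFar : ∀ x, f x ≤ M → x i₀ = 0 → ∀ i, ‖x i‖ ≤ R := by
      intro x hx h0 i
      have := reach_bound hconn x (by positivity : (0:ℝ) ≤ 2*D)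
        (fun j i hi i' hi' => hPair x hx j i hi i' hi') i₀ i
      rwa [h0, dist_zero_right, ← hRdef] at this
    -- injective low-energy configurations have pairwise distance at least r
    have hClose : ∀ x, Function.Injective x → f x ≤ M →
        ∀ i i', i ≠ i' → r ≤ dist (x i) (x i') := by
      intro x hxinj hx i i' hne
      set s : ℝ := ‖x i - x i'‖ with hsdef
      have hs0 : 0 < s := norm_sub_pos_iff.mpr fun h => hne (hxinj h)
      have h1 : β/2 * (w i * w i' / s ^ δ) ≤ M :=
        (repulsion_le (fun j => (hc j).le) (fun i => (hw i).le) hα.le hβ.le hne x).trans hx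
      have hsδ : 0 < s ^ δ := Real.rpow_pos_of_pos hs0 _
      have h1' : β/2 * (w i * w i') ≤ M * s ^ δ := by
        have h1'' : β/2 * (w i * w i') / s ^ δ ≤ M := by rw [mul_div_assoc]; exact h1
        exact (div_le_iff₀ hsδ).mp h1''
      have key : β*(wmin*wmin)/(2*(M+1)) ≤ s ^ δ := by
        rw [div_le_iff₀ (by positivity)]
        have hwi : wmin * wmin ≤ w i * w i' :=
          mul_le_mul (hwmin_le i) (hwmin_le i') hwmin.le (hw i).le
        nlinarith [mul_nonneg (mul_nonneg hβ.le (sub_nonneg.mpr hwi)) (le_of_lt hsδ)]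
      have := Real.rpow_le_rpow (by positivity) key (inv_nonneg.mpr hδ.le)
      rw [Real.rpow_rpow_inv hs0.le hδ.ne'] at this
      rwa [dist_eq_norm]
    -- the compact search region
    set A : Set (Fin k → EuclideanSpace ℝ (Fin d)) :=
      {x | (∀ i, ‖x i‖ ≤ R) ∧ x i₀ = 0 ∧ ∀ i i', i ≠ i' → r ≤ dist (x i) (x i')} with hAdef
    have hx₀A : x₀ ∈ A := ⟨hFar x₀ le_rfl hx₀0, hx₀0, hClose x₀ hx₀inj le_rfl⟩
    have hAclosed : IsClosed A := by
      have hA : A = {x : Fin k → EuclideanSpace ℝ (Fin d) | ∀ i, ‖x i‖ ≤ R}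
          ∩ ({x | x i₀ = 0} ∩ {x | ∀ i i', i ≠ i' → r ≤ dist (x i) (x i')}) := rfl
      rw [hA]
      refine IsClosed.inter ?_ (IsClosed.inter ?_ ?_)
      · rw [Set.setOf_forall]
        exact isClosed_iInter fun i => isClosed_le ((continuous_apply i).norm) continuous_const
      · exact isClosed_eq (continuous_apply i₀) continuous_const
      · rw [Set.setOf_forall]
        refine isClosed_iInter fun i => ?_
        rw [Set.setOf_forall]
        refine isClosed_iInter fun i' => ?_
        by_cases h : i = i'
        · simp only [h, ne_eq, not_true_eq_false, false_implies, Set.setOf_true]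
          exact isClosed_univ
        · simp only [ne_eq, h, not_false_eq_true, forall_const]
          exact isClosed_le continuous_const ((continuous_apply i).dist (continuous_apply i'))
    have hAsub : A ⊆ Metric.closedBall 0 R := by
      intro x hx
      rw [Metric.mem_closedBall, dist_zero_right]
      exact (pi_norm_le_iff_of_nonneg hR0).mpr hx.1
    have hAcomp : IsCompact A :=
      (isCompact_closedBall (0 : Fin k → EuclideanSpace ℝ (Fin d)) R).of_isClosed_subset
        hAclosed hAsub
    -- continuity of the energy on A
    have hcont : ContinuousOn f A := by
      rw [hfdef]
      unfold hyperEnergy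
      refine ContinuousOn.add (Continuous.continuousOn ?_) ?_
      · refine continuous_const.mul (continuous_finset_sum _ fun j _ =>
          continuous_const.mul (continuous_finset_sum _ fun i _ => ?_))
        refine Continuous.rpow_const ?_ fun x => Or.inr hγ.le
        exact Continuous.norm (by fun_prop)
      · refine ContinuousOn.mul continuousOn_const ?_
        refine continuousOn_finset_sum _ fun j _ => continuousOn_finset_sum _ fun i hij => ?_
        have hij' : i ≠ j := (Finset.mem_erase.mp hij).1
        refine ContinuousOn.div continuousOn_const ?_ ?_
        · exact (Continuous.rpow_const ((continuous_apply i).sub (continuous_apply j)).norm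
            fun x => Or.inr hδ.le).continuousOn
        · intro x hxA
          have hd0 : 0 < ‖x i - x j‖ := by
            have := hxA.2.2 i j hij'
            rw [dist_eq_norm] at this
            linarith
          exact (Real.rpow_pos_of_pos hd0 δ).ne'
    obtain ⟨xstar, hstarA, hstarmin⟩ := hAcomp.exists_isMinOn ⟨x₀, hx₀A⟩ hcont
    refine ⟨xstar, ?_, ?_⟩
    · intro a b hab
      by_contra hne
      have := hstarA.2.2 a b hne
      rw [hab, dist_self] at this
      linarith
    · intro x hxinj
      set x' : Fin k → EuclideanSpace ℝ (Fin d) := fun i => x i - x i₀ with hx'def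
      have hfx' : f x' = f x := hyperEnergy_translate he x (x i₀)
      have hx'inj : Function.Injective x' := by
        intro a b hab
        exact hxinj (sub_left_inj.mp hab)
      have hx'0 : x' i₀ = 0 := sub_self _
      by_cases hcase : f x' ≤ M
      · have hx'A : x' ∈ A := ⟨hFar x' hcase hx'0, hx'0, hClose x' hx'inj hcase⟩
        calc f xstar ≤ f x' := isMinOn_iff.mp hstarmin x' hx'A
          _ = f x := hfx'
      · have hfle : f xstar ≤ M := isMinOn_iff.mp hstarmin x₀ hx₀A
        rw [← hfx']
        linarith [not_le.mp hcase]
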